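/- arXiv:1712.04262 — 4 statements merged into one kernel-verified Lean document; each statement's English description precedes it below -/
import Mathlib

section
/- Let K be a field, n > k ≥ 1 integers, R = K[x₁,…,xₙ], and let I_{n,k} be the ideal of R generated by all (k+1)-minors of the (k+1)×n Vandermonde matrix M_{n,k} whose (i,j)-entry is x_j^{i-1}. Then the quotient ring R/I_{n,k} is a reduced ring. -/
open MvPolynomial

/-- The `(k+1) × n` Vandermonde matrix of variables: the `(i,j)` entry is `xⱼ^i`
(rows indexed by `0,…,k`, columns by the variables `x₁,…,xₙ`). -/
noncomputable def vandermondeMatrix (K : Type*) [Field K] (n k : ℕ) :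
    Matrix (Fin (k + 1)) (Fin n) (MvPolynomial (Fin n) K) :=
  Matrix.of fun i j => (X j : MvPolynomial (Fin n) K) ^ (i : ℕ)

/-- The ideal generated by all maximal (i.e. `(k+1)`-size) minors of the
Vandermonde matrix `vandermondeMatrix K n k`. -/
noncomputable def vanIdeal (K : Type*) [Field K] (n k : ℕ) :
    Ideal (MvPolynomial (Fin n) K) :=
  Ideal.span { d | ∃ g : Fin (k + 1) ↪ Fin n,
    d = ((vandermondeMatrix K n k).submatrix id g).det }

open Finset

namespace VanAux

variable {K : Type*} [Field K]

/-- The product of differences of variables over pairs in the image of `f`. -/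
noncomputable def vProd {σ : Type*} {N : ℕ} (K : Type*) [Field K] (f : Fin N → σ) :
    MvPolynomial σ K :=
  ∏ i : Fin N, ∏ j ∈ Finset.Ioi i, (X (f j) - X (f i))

def vGens (K : Type*) [Field K] (n k : ℕ) : Set (MvPolynomial (Fin n) K) :=
  {d | ∃ g : Fin (k + 1) ↪ Fin n, d = vProd K ⇑g}

theorem rename_vProd {σ τ : Type*} {N : ℕ} (β : σ → τ) (f : Fin N → σ) :
    rename β (vProd K f) = vProd K (β ∘ f) := by
  simp [vProd]

theorem vProd_eq_zero {σ : Type*} {N : ℕ} (f : Fin N → σ)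
    (hf : ¬ Function.Injective f) : vProd K f = 0 := by
  simp only [Function.Injective, not_forall] at hf
  obtain ⟨a, b, hab, hne⟩ := hf
  rcases lt_or_gt_of_ne hne with h | h
  · exact Finset.prod_eq_zero (Finset.mem_univ a)
      (Finset.prod_eq_zero (Finset.mem_Ioi.2 h) (by rw [hab, sub_self]))
  · exact Finset.prod_eq_zero (Finset.mem_univ b)
      (Finset.prod_eq_zero (Finset.mem_Ioi.2 h) (by rw [hab, sub_self]))

theorem rename_mem_span_vGens {n k : ℕ} (β : Fin n → Fin k)
    {x : MvPolynomial (Fin n) K} (hx : x ∈ Ideal.span (vGens K n k)) :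
    rename β x = 0 := by
  have h0 : Ideal.span (vGens K n k) ≤ RingHom.ker (rename β).toRingHom := by
    rw [Ideal.span_le]
    rintro d ⟨g, rfl⟩
    have hni : ¬ Function.Injective (β ∘ ⇑g) := by
      intro h
      have := Fintype.card_le_of_injective _ h
      simp at this
    simp only [SetLike.mem_coe, RingHom.mem_ker]
    show rename β (vProd K ⇑g) = 0
    rw [rename_vProd, vProd_eq_zero _ hni]
  exact h0 hx

variable {m : ℕ}

theorem finSuccEquiv_rename_succ (a : MvPolynomial (Fin m) K) :
    finSuccEquiv K m (rename (Fin.succ : Fin m → Fin (m + 1)) a) = Polynomial.C a := by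
  have h : ((finSuccEquiv K m).toAlgHom.toRingHom.comp
      (rename (Fin.succ : Fin m → Fin (m + 1))).toRingHom)
      = (Polynomial.C : MvPolynomial (Fin m) K →+* _) := by
    apply ringHom_ext
    · intro a; simp [finSuccEquiv_apply]
    · intro i; simp [finSuccEquiv_X_succ]
  exact RingHom.congr_fun h a

theorem finSuccEquiv_symm_C (a : MvPolynomial (Fin m) K) :
    (finSuccEquiv K m).symm (Polynomial.C a) = rename (Fin.succ : Fin m → Fin (m + 1)) a := by
  rw [← finSuccEquiv_rename_succ (K := K) a, AlgEquiv.symm_apply_apply]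

theorem finSuccEquiv_symm_X :
    (finSuccEquiv K m).symm Polynomial.X = (X 0 : MvPolynomial (Fin (m + 1)) K) := by
  rw [← finSuccEquiv_X_zero (R := K) (n := m), AlgEquiv.symm_apply_apply]

theorem mem_map_of_coeffs {J : Ideal (MvPolynomial (Fin m) K)} {p : MvPolynomial (Fin (m + 1)) K}
    (h : ∀ c, (finSuccEquiv K m p).coeff c ∈ J) :
    p ∈ Ideal.map (rename (Fin.succ : Fin m → Fin (m + 1))).toRingHom J := by
  have hp : p = (finSuccEquiv K m).symm (finSuccEquiv K m p) :=
    (AlgEquiv.symm_apply_apply _ _).symm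
  set q := finSuccEquiv K m p with hq
  have hqs : (finSuccEquiv K m).symm q
      = ∑ c ∈ Finset.range (q.natDegree + 1),
          (finSuccEquiv K m).symm (Polynomial.monomial c (q.coeff c)) := by
    rw [← map_sum]
    congr 1
    exact q.as_sum_range' _ (lt_add_one _)
  rw [hp, hqs]
  apply Ideal.sum_mem
  intro c _
  rw [← Polynomial.C_mul_X_pow_eq_monomial, map_mul, map_pow, finSuccEquiv_symm_C,
    finSuccEquiv_symm_X]
  exact Ideal.mul_mem_right _ _ (Ideal.mem_map_of_mem _ (h c))

theorem eval_map_finSuccEquiv {k' : ℕ} (β' : Fin m → Fin k') (b : Fin k')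
    (p : MvPolynomial (Fin (m + 1)) K) :
    Polynomial.eval (X b) (Polynomial.map (rename β').toRingHom (finSuccEquiv K m p))
      = rename (Fin.cases b β' : Fin (m + 1) → Fin k') p := by
  have h : ((Polynomial.evalRingHom (X b : MvPolynomial (Fin k') K)).comp
      ((Polynomial.mapRingHom (rename β').toRingHom).comp
        (finSuccEquiv K m).toAlgHom.toRingHom))
      = (rename (Fin.cases b β' : Fin (m + 1) → Fin k')).toRingHom := by
    apply ringHom_ext
    · intro a; simp [finSuccEquiv_apply]
    · intro i
      refine Fin.cases ?_ ?_ i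
      · simp [finSuccEquiv_X_zero]
      · intro j; simp [finSuccEquiv_X_succ]
  exact RingHom.congr_fun h p

theorem map_finSuccEquiv_eq {k' : ℕ} (β' : Fin m → Fin k') (p : MvPolynomial (Fin (m + 1)) K) :
    Polynomial.map (rename β').toRingHom (finSuccEquiv K m p)
      = finSuccEquiv K k' (rename (Fin.cases 0 (Fin.succ ∘ β') : Fin (m + 1) → Fin (k' + 1)) p) := by
  have h : ((Polynomial.mapRingHom (rename β').toRingHom).comp
        (finSuccEquiv K m).toAlgHom.toRingHom)
      = ((finSuccEquiv K k').toAlgHom.toRingHom.comp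
        (rename (Fin.cases 0 (Fin.succ ∘ β') : Fin (m + 1) → Fin (k' + 1))).toRingHom) := by
    apply ringHom_ext
    · intro a; simp [finSuccEquiv_apply]
    · intro i
      refine Fin.cases ?_ ?_ i
      · simp [finSuccEquiv_X_zero]
      · intro j; simp [finSuccEquiv_X_succ]
  exact RingHom.congr_fun h p

theorem vProd_cases {N : ℕ} (g' : Fin N → Fin m) :
    vProd K (Fin.cases 0 (Fin.succ ∘ g') : Fin (N + 1) → Fin (m + 1))
      = (∏ j : Fin N, (X ((g' j).succ) - X (0 : Fin (m + 1)))) * vProd K (Fin.succ ∘ g') := by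
  rw [vProd, Fin.prod_univ_succ]
  congr 1
  · rw [Fin.prod_Ioi_zero]; simp
  · rw [vProd]
    apply Finset.prod_congr rfl
    intro i _
    rw [Fin.prod_Ioi_succ]
    simp

theorem pT_mul {N : ℕ} (g' : Fin N → Fin m) :
    (∏ j : Fin N, (X (0 : Fin (m + 1)) - X ((g' j).succ)) : MvPolynomial (Fin (m + 1)) K)
        * vProd K (Fin.succ ∘ g')
      = (-1 : MvPolynomial (Fin (m + 1)) K) ^ N
        * vProd K (Fin.cases 0 (Fin.succ ∘ g') : Fin (N + 1) → Fin (m + 1)) := by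
  rw [vProd_cases, ← mul_assoc]
  congr 1
  have h1 : ∀ j : Fin N, (X (0 : Fin (m + 1)) - X ((g' j).succ) : MvPolynomial (Fin (m + 1)) K)
      = (-1) * (X ((g' j).succ) - X 0) := by intro j; ring
  calc (∏ j : Fin N, (X (0 : Fin (m + 1)) - X ((g' j).succ)) : MvPolynomial (Fin (m + 1)) K)
      = ∏ j : Fin N, ((-1) * (X ((g' j).succ) - X (0 : Fin (m + 1)))) :=
        Finset.prod_congr rfl fun j _ => h1 j
    _ = _ := by rw [Finset.prod_mul_distrib, Finset.prod_const, Finset.card_univ, Fintype.card_fin]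

theorem finSuccEquiv_pT {N : ℕ} (g' : Fin N → Fin m) :
    finSuccEquiv K m (∏ j : Fin N, (X (0 : Fin (m + 1)) - X ((g' j).succ)))
      = ∏ j : Fin N, (Polynomial.X - Polynomial.C (X (g' j) : MvPolynomial (Fin m) K)) := by
  rw [map_prod]
  apply Finset.prod_congr rfl
  intro j _
  rw [map_sub, finSuccEquiv_X_zero, finSuccEquiv_X_succ]

theorem reduction {k' : ℕ} {h : MvPolynomial (Fin (m + 1)) K}
    (hh : h ∈ Ideal.span ((rename (Fin.succ : Fin m → Fin (m + 1))) '' (vGens K m k')))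
    (a : MvPolynomial (Fin (m + 1)) K) :
    ∃ r, a * h - r ∈ Ideal.span (vGens K (m + 1) (k' + 1))
      ∧ r ∈ Ideal.span ((rename (Fin.succ : Fin m → Fin (m + 1))) '' (vGens K m k'))
      ∧ (finSuccEquiv K m r).degree < ((k' + 1 : ℕ) : WithBot ℕ) := by
  revert a
  induction hh using Submodule.span_induction with
  | mem x hx =>
    obtain ⟨d, ⟨g', rfl⟩, rfl⟩ := hx
    intro a
    set P : Polynomial (MvPolynomial (Fin m) K) :=
      ∏ j : Fin (k' + 1), (Polynomial.X - Polynomial.C (X (g' j))) with hPdef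
    have hP : P.Monic := Polynomial.monic_prod_of_monic _ _ fun j _ => Polynomial.monic_X_sub_C _
    have hPdeg : P.degree = ((k' + 1 : ℕ) : WithBot ℕ) := by
      rw [hPdef, Polynomial.degree_prod]
      simp [Polynomial.degree_X_sub_C]
    set q := finSuccEquiv K m a with hq
    refine ⟨(finSuccEquiv K m).symm (q %ₘ P) * rename Fin.succ (vProd K ⇑g'), ?_, ?_, ?_⟩
    · have ha : a = (finSuccEquiv K m).symm (q %ₘ P)
          + (∏ j : Fin (k' + 1), (X (0 : Fin (m + 1)) - X ((g' j).succ)))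
            * (finSuccEquiv K m).symm (q /ₘ P) := by
        apply (finSuccEquiv K m).injective
        rw [map_add, map_mul, AlgEquiv.apply_symm_apply, AlgEquiv.apply_symm_apply,
          finSuccEquiv_pT, ← hPdef, Polynomial.modByMonic_add_div _ P]
      have hgh : ∃ ghat : Fin (k' + 1 + 1) ↪ Fin (m + 1),
          ⇑ghat = (Fin.cases 0 (Fin.succ ∘ ⇑g') : Fin (k' + 1 + 1) → Fin (m + 1)) := by
        refine ⟨⟨Fin.cases 0 (Fin.succ ∘ ⇑g'), ?_⟩, rfl⟩
        intro i j hij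
        induction i using Fin.cases with
        | zero =>
          induction j using Fin.cases with
          | zero => rfl
          | succ j =>
            simp only [Fin.cases_zero, Fin.cases_succ, Function.comp_apply] at hij
            exact absurd hij.symm (Fin.succ_ne_zero _)
        | succ i =>
          induction j using Fin.cases with
          | zero =>
            simp only [Fin.cases_zero, Fin.cases_succ, Function.comp_apply] at hij
            exact absurd hij (Fin.succ_ne_zero _)
          | succ j =>
            simp only [Fin.cases_succ, Function.comp_apply] at hij
            exact congrArg Fin.succ (g'.injective (Fin.succ_injective _ hij))
      obtain ⟨ghat, hghat⟩ := hgh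
      have key : a * rename Fin.succ (vProd K ⇑g')
          - (finSuccEquiv K m).symm (q %ₘ P) * rename Fin.succ (vProd K ⇑g')
          = (finSuccEquiv K m).symm (q /ₘ P)
            * ((∏ j : Fin (k' + 1), (X (0 : Fin (m + 1)) - X ((g' j).succ)))
              * vProd K (Fin.succ ∘ ⇑g')) := by
        rw [rename_vProd]
        conv_lhs => rw [ha]
        ring
      rw [key, pT_mul]
      refine Ideal.mul_mem_left _ _ (Ideal.mul_mem_left _ _ (Ideal.subset_span ?_))
      exact ⟨ghat, by rw [hghat]⟩
    · exact Ideal.mul_mem_left _ _ (Ideal.subset_span ⟨_, ⟨g', rfl⟩, rfl⟩)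
    · rw [map_mul, AlgEquiv.apply_symm_apply, finSuccEquiv_rename_succ]
      calc ((q %ₘ P) * Polynomial.C (vProd K ⇑g')).degree
          ≤ (q %ₘ P).degree + (Polynomial.C (vProd K ⇑g')).degree :=
            Polynomial.degree_mul_le _ _
        _ ≤ (q %ₘ P).degree + 0 := add_le_add_right Polynomial.degree_C_le _
        _ = (q %ₘ P).degree := add_zero _
        _ < P.degree := Polynomial.degree_modByMonic_lt _ hP
        _ = _ := hPdeg
  | zero =>
    intro a
    exact ⟨0, by simpa using Ideal.zero_mem _, Ideal.zero_mem _, by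
      rw [map_zero, Polynomial.degree_zero]; exact WithBot.bot_lt_coe _⟩
  | add x y hx hy ihx ihy =>
    intro a
    obtain ⟨r1, h11, h12, h13⟩ := ihx a
    obtain ⟨r2, h21, h22, h23⟩ := ihy a
    refine ⟨r1 + r2, ?_, Ideal.add_mem _ h12 h22, ?_⟩
    · have : a * (x + y) - (r1 + r2) = (a * x - r1) + (a * y - r2) := by ring
      rw [this]
      exact Ideal.add_mem _ h11 h21
    · rw [map_add]
      exact lt_of_le_of_lt (Polynomial.degree_add_le _ _) (max_lt h13 h23)
  | smul b x hx ihx =>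
    intro a
    obtain ⟨r, h1, h2, h3⟩ := ihx (a * b)
    refine ⟨r, ?_, h2, h3⟩
    rw [smul_eq_mul, ← mul_assoc]
    exact h1

theorem key (K : Type*) [Field K] :
    ∀ n k : ℕ, k ≤ n → ∀ g : MvPolynomial (Fin n) K,
      (∀ β : Fin n → Fin k, rename β g = 0) → g ∈ Ideal.span (vGens K n k) := by
  intro n
  induction n with
  | zero =>
    intro k hk g hg
    interval_cases k
    have hinj := rename_injective (R := K) (fun x : Fin 0 => x) Function.injective_id
    have hg0 : g = 0 := hinj (by rw [hg (fun x => x), map_zero])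
    rw [hg0]
    exact Ideal.zero_mem _
  | succ m IH =>
    intro k hk g hg
    by_cases hkn : k = m + 1
    · subst hkn
      have hinj := rename_injective (R := K) (fun x : Fin (m + 1) => x) Function.injective_id
      have hg0 : g = 0 := hinj (by rw [hg (fun x => x), map_zero])
      rw [hg0]
      exact Ideal.zero_mem _
    · have hkm : k ≤ m := by omega
      cases k with
      | zero =>
        have h1 : (1 : MvPolynomial (Fin (m + 1)) K) ∈ vGens K (m + 1) 0 := by
          refine ⟨⟨fun _ => 0, fun a b _ => Fin.ext (by omega)⟩, ?_⟩
          have hIoi : ∀ i : Fin 1, Finset.Ioi i = (∅ : Finset (Fin 1)) := by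
            intro i
            ext j
            simp only [Finset.mem_Ioi, Finset.notMem_empty, iff_false, not_lt]
            exact le_of_eq (Fin.ext (by omega))
          rw [vProd]
          simp [hIoi]
        have htop : Ideal.span (vGens K (m + 1) 0) = ⊤ :=
          (Ideal.eq_top_iff_one _).2 (Ideal.subset_span h1)
        rw [htop]
        trivial
      | succ k' =>
        have hcoeff : ∀ c, (finSuccEquiv K m g).coeff c ∈ Ideal.span (vGens K m k') := by
          intro c
          apply IH k' (by omega)
          intro β'
          have h4 := map_finSuccEquiv_eq β' g
          rw [hg (Fin.cases 0 (Fin.succ ∘ β')), map_zero] at h4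
          have h5 := congrArg (fun w : Polynomial (MvPolynomial (Fin k') K) => w.coeff c) h4
          simpa [Polynomial.coeff_map] using h5
        have hg1 : g ∈ Ideal.span
            ((rename (Fin.succ : Fin m → Fin (m + 1))) '' (vGens K m k')) := by
          have h6 := mem_map_of_coeffs hcoeff
          rwa [Ideal.map_span] at h6
        obtain ⟨r, hr1, hr2, hr3⟩ := reduction hg1 1
        rw [one_mul] at hr1
        have hrJ : ∀ β : Fin (m + 1) → Fin (k' + 1), rename β r = 0 := by
          intro β
          have h5 : rename β (g - r) = 0 := rename_mem_span_vGens β hr1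
          rw [map_sub, hg β, zero_sub, neg_eq_zero] at h5
          exact h5
        have hrc : ∀ c, (finSuccEquiv K m r).coeff c ∈ Ideal.span (vGens K m (k' + 1)) := by
          intro c
          apply IH (k' + 1) hkm
          intro β'
          set W := Polynomial.map (rename β').toRingHom (finSuccEquiv K m r) with hW
          have hW0 : W = 0 := by
            apply Polynomial.eq_zero_of_natDegree_lt_card_of_eval_eq_zero W
              (f := fun b : Fin (k' + 1) => (X b : MvPolynomial (Fin (k' + 1)) K))
              (fun a b hab => X_injective hab)
            · intro b
              rw [hW, eval_map_finSuccEquiv]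
              exact hrJ _
            · have h7 : (finSuccEquiv K m r).natDegree < k' + 1 := by
                rcases eq_or_ne (finSuccEquiv K m r) 0 with h | h
                · rw [h, Polynomial.natDegree_zero]; omega
                · exact (Polynomial.natDegree_lt_iff_degree_lt h).2 hr3
              calc W.natDegree ≤ (finSuccEquiv K m r).natDegree :=
                    Polynomial.natDegree_map_le
                _ < k' + 1 := h7
                _ = Fintype.card (Fin (k' + 1)) := by simp
          have h8 := congrArg
            (fun w : Polynomial (MvPolynomial (Fin (k' + 1)) K) => w.coeff c) hW0
          simpa [hW, Polynomial.coeff_map] using h8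
        have hr4 : r ∈ Ideal.span
            ((rename (Fin.succ : Fin m → Fin (m + 1))) '' (vGens K m (k' + 1))) := by
          have h9 := mem_map_of_coeffs hrc
          rwa [Ideal.map_span] at h9
        have hsub : (rename (Fin.succ : Fin m → Fin (m + 1))) '' (vGens K m (k' + 1))
            ⊆ vGens K (m + 1) (k' + 1) := by
          rintro _ ⟨d, ⟨g', rfl⟩, rfl⟩
          exact ⟨g'.trans ⟨Fin.succ, Fin.succ_injective m⟩, by rw [rename_vProd]; rfl⟩
        have hrI : r ∈ Ideal.span (vGens K (m + 1) (k' + 1)) := Ideal.span_mono hsub hr4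
        have hgr : g = (g - r) + r := by ring
        rw [hgr]
        exact Ideal.add_mem _ hr1 hrI

theorem vanIdeal_eq_span (K : Type*) [Field K] (n k : ℕ) :
    vanIdeal K n k = Ideal.span (vGens K n k) := by
  have hdet : ∀ g : Fin (k + 1) ↪ Fin n,
      ((vandermondeMatrix K n k).submatrix id ⇑g).det = vProd K ⇑g := by
    intro g
    have hmat : (vandermondeMatrix K n k).submatrix id ⇑g
        = Matrix.transpose (Matrix.vandermonde (fun t => (X (g t) : MvPolynomial (Fin n) K))) := by
      ext i j
      simp [vandermondeMatrix, Matrix.vandermonde]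
    rw [hmat, Matrix.det_transpose, Matrix.det_vandermonde]
    rfl
  unfold vanIdeal vGens
  congr 1
  ext d
  exact exists_congr fun g => by rw [hdet g]

theorem main (K : Type*) [Field K] (n k : ℕ) (hn : k ≤ n) :
    IsReduced (MvPolynomial (Fin n) K ⧸ vanIdeal K n k) := by
  have hspan := vanIdeal_eq_span K n k
  constructor
  intro x hx
  obtain ⟨r, rfl⟩ := Ideal.Quotient.mk_surjective x
  obtain ⟨c, hc⟩ := hx
  rw [← map_pow] at hc
  have hrc : r ^ c ∈ vanIdeal K n k := Ideal.Quotient.eq_zero_iff_mem.1 hc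
  rcases Nat.eq_zero_or_pos c with h0 | hpos
  · subst h0
    rw [pow_zero] at hrc
    have h1 : (1 : MvPolynomial (Fin n) K ⧸ vanIdeal K n k) = 0 := by
      rw [← map_one (Ideal.Quotient.mk (vanIdeal K n k))]
      exact Ideal.Quotient.eq_zero_iff_mem.2 hrc
    calc Ideal.Quotient.mk (vanIdeal K n k) r
        = Ideal.Quotient.mk (vanIdeal K n k) r * 1 := (mul_one _).symm
      _ = Ideal.Quotient.mk (vanIdeal K n k) r * 0 := by rw [h1]
      _ = 0 := mul_zero _
  · have hβ : ∀ β : Fin n → Fin k, rename β r = 0 := by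
      intro β
      have h1 : rename β (r ^ c) = 0 := rename_mem_span_vGens β (hspan ▸ hrc)
      rw [map_pow] at h1
      exact (pow_eq_zero_iff (Nat.pos_iff_ne_zero.1 hpos)).1 h1
    have h2 := key K n k hn r hβ
    exact Ideal.Quotient.eq_zero_iff_mem.2 (hspan ▸ h2)

end VanAux

/-- Vandermonde determinantal ideals: `R ⧸ I_{n,k}` is a reduced ring. -/
theorem vanIdeal_quotient_isReduced (K : Type*) [Field K] (n k : ℕ)
    (hk : 1 ≤ k) (hn : k < n) :
    IsReduced (MvPolynomial (Fin n) K ⧸ vanIdeal K n k) :=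
  VanAux.main K n k (le_of_lt hn)
end

section
/- Let K be a field, n > k ≥ 1 integers, R = K[x₁,…,xₙ], and I_{n,k} the ideal generated by all (k+1)-minors of the (k+1)×n Vandermonde matrix M_{n,k}. Then the height of I_{n,k} in R equals n − k. -/
open MvPolynomial

-- arithmetic lemma
lemma arith_aux (n d : ℕ) :
    ((n+1) * ((n+1)*d+1)^(n+1) * d + 1)^n < (((n+1)*d+1)^(n+1) + 1)^(n+1) := by
  set c := (n+1)*d+1 with hc
  set M := c^(n+1) with hM
  have hc1 : 1 ≤ c := Nat.succ_le_succ (Nat.zero_le _)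
  have hM1 : 1 ≤ M := Nat.one_le_pow _ _ (Nat.succ_le_succ (Nat.zero_le _))
  have h1 : (n+1)*M*d + 1 ≤ c*M := by
    have : (n+1)*M*d = ((n+1)*d)*M := by ring
    rw [this]
    calc ((n+1)*d)*M + 1 ≤ ((n+1)*d)*M + M := Nat.add_le_add_left hM1 _
    _ = c*M := by rw [hc]; ring
  calc ((n+1)*M*d + 1)^n ≤ (c*M)^n := Nat.pow_le_pow_left h1 n
    _ = c^(n*(n+2)) := by rw [hM, mul_pow, ← pow_mul, ← pow_add]; ring_nf
    _ ≤ c^((n+1)*(n+1)) := Nat.pow_le_pow_right hc1 (by nlinarith)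
    _ = M^(n+1) := by rw [hM, ← pow_mul]
    _ < (M+1)^(n+1) := Nat.pow_lt_pow_left (Nat.lt_succ_self M) (Nat.succ_ne_zero n)

-- counting lemma: n+1 alg independent elements can't exist in a quotient of K[x_1..x_n]
lemma card_le_of_algIndep {K : Type*} [Field K] {n : ℕ} {A : Type*} [CommRing A]
    [Nontrivial A] [Algebra K A]
    (φ : MvPolynomial (Fin n) K →ₐ[K] A) (hφ : Function.Surjective φ)
    {m : ℕ} {b : Fin m → A} (hb : AlgebraicIndependent K b) : m ≤ n := by
  by_contra hmn
  push_neg at hmn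
  have hb' : AlgebraicIndependent K (b ∘ Fin.castLE hmn) :=
    hb.comp _ (Fin.castLE_injective hmn)
  set b' : Fin (n+1) → A := b ∘ Fin.castLE hmn with hb'def
  clear_value b'
  clear hb hb'def hmn b
  classical
  choose w hw using fun i => hφ (b' i)
  set d := Finset.univ.sup (fun i => (w i).totalDegree) with hd
  have hdle : ∀ i, (w i).totalDegree ≤ d := fun i => hd ▸ Finset.le_sup (f := fun i => (w i).totalDegree) (Finset.mem_univ i)
  set c := (n+1)*d+1 with hc
  set M := c^(n+1) with hM
  set D := (n+1)*M*d with hD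
  set ms : (Fin (n+1) → Fin (M+1)) → (Fin (n+1) →₀ ℕ) :=
    fun α => Finsupp.equivFunOnFinite.symm (fun i => (α i : ℕ)) with hms
  set z : (Fin (n+1) → Fin (M+1)) → A := fun α => φ (∏ i, w i ^ ((α i : ℕ))) with hzdef
  have hinj : Function.Injective (aeval b' : MvPolynomial (Fin (n+1)) K →ₐ[K] A) :=
    algebraicIndependent_iff_injective_aeval.mp hb'
  have hz : z = ((aeval b' : MvPolynomial (Fin (n+1)) K →ₐ[K] A).toLinearMap) ∘
      (fun α => monomial (ms α) (1:K)) := by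
    funext α
    simp only [hzdef, Function.comp_apply, AlgHom.toLinearMap_apply, aeval_monomial, map_one,
      one_mul]
    rw [Finsupp.prod_fintype]
    · rw [map_prod]
      congr 1
      funext i
      simp [hms, hw]
    · intro i; exact pow_zero _
  have hmsinj : Function.Injective ms := by
    intro a b hab
    funext i
    have := congrArg (fun f => f i) (Finsupp.equivFunOnFinite.symm.injective hab)
    exact Fin.val_injective this
  have hzli : LinearIndependent K z := by
    rw [hz]
    exact LinearIndependent.map' ((basisMonomials (Fin (n+1)) K).linearIndependent.comp ms hmsinj)
      _ (LinearMap.ker_eq_bot.mpr hinj)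
  set monβ : (Fin n → Fin (D+1)) → MvPolynomial (Fin n) K :=
    fun β => monomial (Finsupp.equivFunOnFinite.symm (fun j => (β j : ℕ))) (1:K) with hmonβ
  set wS : Set A := Set.range (fun β => φ (monβ β)) with hwS
  have hspan : Set.range z ≤ Submodule.span K wS := by
    rintro _ ⟨α, rfl⟩
    set u := ∏ i, w i ^ ((α i : ℕ)) with hu
    have htu : u.totalDegree ≤ D := by
      calc u.totalDegree ≤ ∑ i, (w i ^ ((α i : ℕ))).totalDegree :=
            totalDegree_finset_prod _ _
        _ ≤ ∑ _i : Fin (n+1), M * d := by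
            apply Finset.sum_le_sum
            intro i _
            calc (w i ^ ((α i : ℕ))).totalDegree ≤ (α i : ℕ) * (w i).totalDegree :=
                  totalDegree_pow _ _
              _ ≤ M * d := Nat.mul_le_mul (Nat.lt_succ_iff.mp (α i).isLt) (hdle i)
        _ = D := by simp [hD]; ring
    have humem : u ∈ Submodule.span K (Set.range monβ) := by
      rw [u.as_sum]
      apply Submodule.sum_mem
      intro v hv
      have hvle : ∀ j, v j ≤ D := by
        intro j
        have h1 : v.sum (fun _ e => e) ≤ u.totalDegree := MvPolynomial.le_totalDegree hv
        have h2 : v j ≤ v.sum (fun _ e => e) := by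
          by_cases hj : j ∈ v.support
          · exact Finset.single_le_sum (fun _ _ => Nat.zero_le _) hj
          · simp [Finsupp.notMem_support_iff.mp hj]
        omega
      have : monomial v (coeff v u) = (coeff v u) • monomial v (1:K) := by
        rw [smul_monomial, smul_eq_mul, mul_one]
      rw [this]
      apply Submodule.smul_mem
      apply Submodule.subset_span
      refine ⟨fun j => ⟨v j, Nat.lt_succ_of_le (hvle j)⟩, ?_⟩
      simp only [hmonβ]
      congr 1
      exact congrArg monomial (Finsupp.equivFunOnFinite.symm_apply_apply v)
    have : φ.toLinearMap u ∈ Submodule.map φ.toLinearMap (Submodule.span K (Set.range monβ)) :=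
      Submodule.mem_map_of_mem humem
    rw [Submodule.map_span, ← Set.range_comp] at this
    exact this
  haveI : Fintype wS := Set.fintypeRange _
  have hcard := linearIndependent_le_span' z hzli wS hspan
  rw [Cardinal.mk_fintype] at hcard
  simp only [Fintype.card_fun, Fintype.card_fin] at hcard
  have hcard2 : Fintype.card wS ≤ (D+1)^n := by
    calc Fintype.card wS ≤ Fintype.card (Fin n → Fin (D+1)) := Fintype.card_range_le _
      _ = (D+1)^n := by rw [Fintype.card_fun]; simp
  have hcc : ((Fintype.card wS : ℕ) : Cardinal) ≤ (((D+1)^n : ℕ) : Cardinal) :=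
    Nat.cast_le.mpr hcard2
  have hfin : (M+1)^(n+1) ≤ (D+1)^n := by exact_mod_cast hcard.trans hcc
  exact absurd hfin (Nat.not_le.mpr (arith_aux n d))


lemma algIndep_succ_of_lt {K R : Type*} [Field K] [CommRing R] [Algebra K R]
    {P Q : Ideal R} [P.IsPrime] [Q.IsPrime] (hPQ : P < Q)
    {m : ℕ} {b : Fin m → R ⧸ Q} (hb : AlgebraicIndependent K b) :
    ∃ c : Fin (m+1) → R ⧸ P, AlgebraicIndependent K c := by
  classical
  have hle : P ≤ Q := le_of_lt hPQ
  set ψ : R ⧸ P →ₐ[K] R ⧸ Q :=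
    Ideal.Quotient.liftₐ P (Ideal.Quotient.mkₐ K Q)
      (fun a ha => by
        simp only [Ideal.Quotient.mkₐ_eq_mk, Ideal.Quotient.eq_zero_iff_mem]
        exact hle ha) with hψ
  have hψmk : ∀ r : R, ψ (Ideal.Quotient.mk P r) = Ideal.Quotient.mk Q r := by
    intro r
    simp [hψ]
    rfl
  choose w hw using fun i => Ideal.Quotient.mk_surjective (I := Q) (b i)
  set a : Fin m → R ⧸ P := fun i => Ideal.Quotient.mk P (w i) with ha_def
  have hψa : ψ ∘ a = b := by
    funext i
    simp [ha_def, hψmk, hw]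
  have ha : AlgebraicIndependent K a := AlgebraicIndependent.of_comp ψ (hψa ▸ hb)
  obtain ⟨f₀, hf₀Q, hf₀P⟩ := SetLike.exists_of_lt hPQ
  set f : R ⧸ P := Ideal.Quotient.mk P f₀ with hf_def
  have hfne : f ≠ 0 := by
    simpa [hf_def, Ideal.Quotient.eq_zero_iff_mem] using hf₀P
  have hψf : ψ f = 0 := by
    rw [hf_def, hψmk, Ideal.Quotient.eq_zero_iff_mem]
    exact hf₀Q
  by_cases hT : Transcendental (Algebra.adjoin K (Set.range a)) f
  · have hopt : AlgebraicIndependent K (fun o : Option (Fin m) => o.elim f a) :=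
      (ha.option_iff_transcendental f).mpr hT
    exact ⟨_, (algebraicIndependent_equiv (finSuccEquiv m)).mpr hopt⟩
  · exfalso
    rw [Transcendental, not_not] at hT
    obtain ⟨p, hp0, hpe⟩ := hT
    set j₀ := p.natTrailingDegree with hj₀
    have hdvd : Polynomial.X ^ j₀ ∣ p :=
      Polynomial.X_pow_dvd_iff.mpr fun d hd =>
        Polynomial.coeff_eq_zero_of_lt_natTrailingDegree hd
    obtain ⟨q, hq⟩ := hdvd
    have hq00 : q.coeff 0 = p.trailingCoeff := by
      rw [Polynomial.trailingCoeff, ← hj₀, hq]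
      simpa using (Polynomial.coeff_X_pow_mul q j₀ 0).symm
    have hq0 : q.coeff 0 ≠ 0 := by
      rw [hq00]
      exact fun h => hp0 (Polynomial.trailingCoeff_eq_zero.mp h)
    have hqe : Polynomial.aeval f q = 0 := by
      have h1 : (0 : R ⧸ P) = f ^ j₀ * Polynomial.aeval f q := by
        rw [← hpe, hq, map_mul, map_pow, Polynomial.aeval_X]
      rcases mul_eq_zero.mp h1.symm with h | h
      · exact absurd h (pow_ne_zero _ hfne)
      · exact h
    have key : ψ ((algebraMap (Algebra.adjoin K (Set.range a)) (R ⧸ P)) (q.coeff 0)) = 0 := by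
      have h2 : ψ (Polynomial.aeval f q) = 0 := by rw [hqe, map_zero]
      rw [Polynomial.aeval_def] at h2
      have h2' : Polynomial.eval₂
          ((ψ : R ⧸ P →+* R ⧸ Q).comp (algebraMap (Algebra.adjoin K (Set.range a)) (R ⧸ P)))
          ((ψ : R ⧸ P →+* R ⧸ Q) f) q = 0 := by
        rw [← Polynomial.hom_eval₂]; exact h2
      rw [show ((ψ : R ⧸ P →+* R ⧸ Q) f) = 0 from hψf, Polynomial.eval₂_at_zero,
        RingHom.comp_apply] at h2'
      exact h2'
    have hval : ((q.coeff 0 : Algebra.adjoin K (Set.range a)) : R ⧸ P) ∈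
        (aeval a : MvPolynomial (Fin m) K →ₐ[K] R ⧸ P).range := by
      rw [← Algebra.adjoin_range_eq_range_aeval]
      exact (q.coeff 0).2
    obtain ⟨H, hH⟩ := hval
    have hH : aeval a H = ((q.coeff 0 : Algebra.adjoin K (Set.range a)) : R ⧸ P) := hH
    have hbH : aeval b H = 0 := by
      have h3 : ψ (aeval a H) = aeval b H := by
        rw [comp_aeval_apply, show (fun i => ψ (a i)) = b from funext fun i => congrFun hψa i]
      rw [hH] at h3
      rw [← h3]
      exact key
    have hH0 : H = 0 := by
      have hinj : Function.Injective (aeval b : MvPolynomial (Fin m) K →ₐ[K] R ⧸ Q) :=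
        algebraicIndependent_iff_injective_aeval.mp hb
      exact hinj (a₁ := H) (a₂ := 0) (by rw [hbH, map_zero])
    rw [hH0, map_zero] at hH
    exact hq0 (Subtype.ext (by simpa using hH.symm))

lemma ltSeries_length_le {K : Type*} [Field K] {n : ℕ}
    (p : LTSeries (PrimeSpectrum (MvPolynomial (Fin n) K))) : p.length ≤ n := by
  have main : ∀ j, j ≤ p.length →
      ∃ c : Fin j → (MvPolynomial (Fin n) K ⧸
        (p ⟨p.length - j, by omega⟩).asIdeal), AlgebraicIndependent K c := by
    intro j
    induction j with
    | zero =>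
      intro _
      haveI := (p ⟨p.length, by omega⟩).2
      exact ⟨fun i => 0, algebraicIndependent_empty_type⟩
    | succ j ih =>
      intro hj
      obtain ⟨c, hc⟩ := ih (by omega)
      have hlt : (p ⟨p.length - (j+1), by omega⟩) < (p ⟨p.length - j, by omega⟩) := by
        apply p.strictMono
        simp only [Fin.mk_lt_mk]
        omega
      haveI := (p ⟨p.length - (j+1), by omega⟩).2
      haveI := (p ⟨p.length - j, by omega⟩).2
      exact algIndep_succ_of_lt ((PrimeSpectrum.asIdeal_lt_asIdeal _ _).mpr hlt) hc
  obtain ⟨c, hc⟩ := main p.length le_rfl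
  haveI := (p ⟨p.length - p.length, by omega⟩).2
  exact card_le_of_algIndep (Ideal.Quotient.mkₐ K _) (Ideal.Quotient.mkₐ_surjective K _) hc

lemma sub_aeval_mem {K : Type*} [CommRing K] {n : ℕ} (J : Ideal (MvPolynomial (Fin n) K))
    (f : Fin n → MvPolynomial (Fin n) K) (hf : ∀ j, X j - f j ∈ J)
    (q : MvPolynomial (Fin n) K) : q - aeval f q ∈ J := by
  induction q using MvPolynomial.induction_on with
  | C a => simp
  | add p q hp hq =>
    have := J.add_mem hp hq
    have heq : p + q - aeval f (p + q) = (p - aeval f p) + (q - aeval f q) := by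
      rw [map_add]; ring
    rw [heq]; exact this
  | mul_X p i hp =>
    have heq : p * X i - aeval f (p * X i) =
        (p - aeval f p) * X i + aeval f p * (X i - f i) := by
      rw [map_mul, aeval_X]; ring
    rw [heq]
    exact J.add_mem (J.mul_mem_right _ hp) (J.mul_mem_left _ (hf i))

lemma ker_aeval_le {K : Type*} [CommRing K] {n : ℕ} (P : Ideal (MvPolynomial (Fin n) K))
    (f : Fin n → MvPolynomial (Fin n) K) (hf : ∀ j, X j - f j ∈ P) :
    RingHom.ker (aeval f : MvPolynomial (Fin n) K →ₐ[K] MvPolynomial (Fin n) K) ≤ P := by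
  intro q hq
  rw [RingHom.mem_ker] at hq
  have := sub_aeval_mem P f hf q
  rwa [hq, sub_zero] at this

lemma ker_aeval_mono {K : Type*} [CommRing K] {n : ℕ}
    {g g' h : Fin n → MvPolynomial (Fin n) K}
    (hcomp : ∀ j, aeval h (g j) = g' j) :
    RingHom.ker (aeval g : MvPolynomial (Fin n) K →ₐ[K] MvPolynomial (Fin n) K) ≤
      RingHom.ker (aeval g' : MvPolynomial (Fin n) K →ₐ[K] MvPolynomial (Fin n) K) := by
  intro q hq
  rw [RingHom.mem_ker] at hq ⊢
  have h1 : aeval g' q = aeval h (aeval g q) := by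
    rw [comp_aeval_apply, show (fun i => aeval h (g i)) = g' from funext hcomp]
  rw [h1, hq, map_zero]

lemma van_minor_eq {K : Type*} [Field K] {n k : ℕ} (g : Fin (k+1) ↪ Fin n) :
    ((vandermondeMatrix K n k).submatrix id g).det =
      ∏ i : Fin (k+1), ∏ j ∈ Finset.Ioi i,
        ((X (g j) : MvPolynomial (Fin n) K) - X (g i)) := by
  have h1 : (vandermondeMatrix K n k).submatrix id g =
      (Matrix.vandermonde (fun i => (X (g i) : MvPolynomial (Fin n) K))).transpose := by
    ext i j
    simp [vandermondeMatrix, Matrix.vandermonde]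
  rw [h1, Matrix.det_transpose, Matrix.det_vandermonde]

lemma upper_bound {K : Type*} [Field K] {n k : ℕ} (hk : 1 ≤ k) (hn : k < n) :
    ∃ P : PrimeSpectrum (MvPolynomial (Fin n) K), vanIdeal K n k ≤ P.asIdeal ∧
      Order.height P ≤ ((n - k : ℕ) : ℕ∞) := by
  classical
  set r := n - k with hr
  have hrn : r < n := by omega
  set base : Fin n := ⟨r, hrn⟩ with hbase
  set gU : ℕ → Fin n → MvPolynomial (Fin n) K := fun s j =>
    if n - s ≤ max (j : ℕ) r then 0 else if (j : ℕ) < r then X base else X j with hgU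
  set QU : ℕ → Ideal (MvPolynomial (Fin n) K) := fun s =>
    RingHom.ker (aeval (gU s) : MvPolynomial (Fin n) K →ₐ[K] MvPolynomial (Fin n) K) with hQU
  have hQUprime : ∀ s, (QU s).IsPrime := fun s => RingHom.ker_isPrime _
  -- value of gU 0
  have hgU0 : ∀ j : Fin n, gU 0 j = X (⟨max (j : ℕ) r, by omega⟩ : Fin n) := by
    intro j
    have h1 : ¬ (n - 0 ≤ max (j : ℕ) r) := by
      simp only [Nat.sub_zero]
      push_neg
      exact max_lt j.2 hrn
    rw [hgU]
    simp only [h1, if_false]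
    by_cases h2 : (j : ℕ) < r
    · rw [if_pos h2]
      congr 1
      rw [hbase]
      exact Fin.ext (by simp [max_eq_right (le_of_lt h2)])
    · rw [if_neg h2]
      congr 1
      exact Fin.ext (by simp [max_eq_left (not_lt.mp h2)])
  -- vanIdeal ≤ QU 0
  have hvan : vanIdeal K n k ≤ QU 0 := by
    rw [vanIdeal, Ideal.span_le]
    rintro d ⟨g, rfl⟩
    have hpig : ∃ a ∈ Finset.univ, ∃ b ∈ Finset.univ, a ≠ b ∧
        (fun i : Fin (k+1) => max ((g i : ℕ)) r) a = (fun i => max ((g i : ℕ)) r) b := by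
      apply Finset.exists_ne_map_eq_of_card_lt_of_maps_to (t := Finset.Ico r n)
      · simp only [Finset.card_univ, Fintype.card_fin, Nat.card_Ico]
        omega
      · intro a _
        simp only [Finset.mem_Ico]
        exact Finset.mem_Ico.mpr ⟨le_max_right _ _, max_lt (g a).2 hrn⟩
    obtain ⟨a, -, b, -, hab, hvaleq⟩ := hpig
    have key : ∀ (i0 j0 : Fin (k+1)), i0 < j0 → max ((g i0 : ℕ)) r = max ((g j0 : ℕ)) r →
        ((vandermondeMatrix K n k).submatrix id g).det ∈ QU 0 := by
      intro i0 j0 hij heq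
      show _ ∈ RingHom.ker _
      rw [RingHom.mem_ker, van_minor_eq, map_prod]
      apply Finset.prod_eq_zero (Finset.mem_univ i0)
      rw [map_prod]
      apply Finset.prod_eq_zero (Finset.mem_Ioi.mpr hij)
      rw [map_sub, aeval_X, aeval_X, hgU0, hgU0]
      rw [show (⟨max ((g j0 : ℕ)) r, by omega⟩ : Fin n) = ⟨max ((g i0 : ℕ)) r, by omega⟩ from
        Fin.ext (by simp [heq])]
      exact sub_self _
    rcases lt_or_gt_of_ne hab with h | h
    · exact key a b h hvaleq
    · exact key b a h hvaleq.symm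
  -- the strict ascent
  have hstep : ∀ s, s < k → QU s < QU (s+1) := by
    intro s hs
    have hv : n - s - 1 < n := by omega
    have hrv : r ≤ n - s - 1 := by omega
    set v : Fin n := ⟨n - s - 1, hv⟩ with hvdef
    have hle : QU s ≤ QU (s+1) := by
      apply ker_aeval_mono (h := fun j => if j = v then 0 else X j)
      intro j
      by_cases hc1 : n - s ≤ max (j : ℕ) r
      · have hc1' : n - (s+1) ≤ max (j : ℕ) r := by omega
        rw [hgU]
        simp only [hc1, hc1', if_true, map_zero]
      · by_cases hc2 : (j : ℕ) < r
        · have hmax : max (j : ℕ) r = r := max_eq_right (le_of_lt hc2)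
          rw [hgU]
          simp only [hc1, if_false, hc2, if_true, aeval_X]
          by_cases hc3 : r = n - s - 1
          · have hbv : base = v := Fin.ext (by simp [hbase, hvdef, hc3])
            rw [if_pos hbv, if_pos (by rw [hmax]; omega)]
          · have hbv : base ≠ v := fun hbv => hc3 (by simpa [hbase, hvdef, Fin.ext_iff] using hbv)
            rw [if_neg hbv, if_neg (by rw [hmax]; omega)]
        · have hmax : max (j : ℕ) r = (j : ℕ) := max_eq_left (not_lt.mp hc2)
          rw [hgU]
          simp only [hc1, if_false, hc2, if_true, aeval_X]
          by_cases hc3 : j = v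
          · rw [if_pos hc3, if_pos (by rw [hmax, hc3]; simp [hvdef]; omega)]
          · have hjv : (j : ℕ) ≠ n - s - 1 := fun hh => hc3 (Fin.ext (by simp [hvdef, hh]))
            rw [if_neg hc3, if_neg (by rw [hmax]; omega)]
    have hmem : X v ∈ QU (s+1) := by
      rw [hQU, RingHom.mem_ker, aeval_X, hgU]
      have : n - (s+1) ≤ max ((v : ℕ)) r := by simp [hvdef]; omega
      simp [this]
    have hnot : X v ∉ QU s := by
      rw [hQU, RingHom.mem_ker, aeval_X, hgU]
      have h1 : ¬ (n - s ≤ max ((v : ℕ)) r) := by simp [hvdef]; omega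
      have h2 : ¬ ((v : ℕ) < r) := by simp [hvdef]; omega
      simp only [h1, if_false, h2]
      exact X_ne_zero _
    exact lt_of_le_not_ge hle (fun hle' => hnot (hle' hmem))
  -- assemble
  refine ⟨⟨QU 0, hQUprime 0⟩, hvan, ?_⟩
  apply Order.height_le
  intro q hq
  set ascent : LTSeries (PrimeSpectrum (MvPolynomial (Fin n) K)) :=
    { length := k
      toFun := fun s => ⟨QU (s : ℕ), hQUprime _⟩
      step := fun i => by
        have h1 : ((Fin.castSucc i : Fin (k+1)) : ℕ) = (i : ℕ) := rfl
        have h2 : ((Fin.succ i : Fin (k+1)) : ℕ) = (i : ℕ) + 1 := rfl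
        show (⟨QU _, _⟩ : PrimeSpectrum _) < ⟨QU _, _⟩
        rw [← PrimeSpectrum.asIdeal_lt_asIdeal]
        simpa [h1, h2] using hstep (i : ℕ) i.2 } with hasc
  have hconnect : q.last = ascent.head := by
    rw [hq]
    rfl
  have htot := ltSeries_length_le (q.smash ascent hconnect)
  have hlen : (q.smash ascent hconnect).length = q.length + k := rfl
  rw [hlen] at htot
  have : q.length ≤ n - k := by omega
  exact_mod_cast this

lemma lower_bound {K : Type*} [Field K] {n k : ℕ} (hk : 1 ≤ k) (hn : k < n)
    (P : PrimeSpectrum (MvPolynomial (Fin n) K)) (hP : vanIdeal K n k ≤ P.asIdeal) :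
    ((n - k : ℕ) : ℕ∞) ≤ Order.height P := by
  classical
  haveI := P.2
  set SS : Fin n → Finset (Fin n) := fun i =>
    Finset.univ.filter (fun j => X i - X j ∈ P.asIdeal) with hSS
  have hSmem : ∀ i, i ∈ SS i := by
    intro i
    simp only [hSS, Finset.mem_filter, Finset.mem_univ, true_and, sub_self]
    exact P.asIdeal.zero_mem
  have hSne : ∀ i, (SS i).Nonempty := fun i => ⟨i, hSmem i⟩
  set rep : Fin n → Fin n := fun i => (SS i).min' (hSne i) with hrep
  have hmemSS : ∀ i j, j ∈ SS i ↔ X i - X j ∈ P.asIdeal := by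
    intro i j
    simp [hSS]
  have hrepP : ∀ i, X i - X (rep i) ∈ P.asIdeal := fun i =>
    (hmemSS i _).mp ((SS i).min'_mem (hSne i))
  have hSeq : ∀ i j, X i - X j ∈ P.asIdeal → SS i = SS j := by
    intro i j hij
    ext l
    rw [hmemSS, hmemSS]
    constructor
    · intro h
      have := P.asIdeal.sub_mem h hij
      rwa [sub_sub_sub_cancel_left] at this
    · intro h
      have := P.asIdeal.add_mem hij h
      rwa [sub_add_sub_cancel] at this
  have hrepeq : ∀ i j, X i - X j ∈ P.asIdeal → rep i = rep j := by
    intro i j h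
    simp only [hrep]
    congr 1
    exact hSeq i j h
  have hrepfix : ∀ i, rep (rep i) = rep i := fun i => (hrepeq i (rep i) (hrepP i)).symm
  set TP : Finset (Fin n) := Finset.image rep Finset.univ with hTP
  have hTPfix : ∀ t ∈ TP, rep t = t := by
    intro t ht
    obtain ⟨i, -, rfl⟩ := Finset.mem_image.mp ht
    exact hrepfix i
  have hTPcard : TP.card ≤ k := by
    by_contra hcon
    push_neg at hcon
    obtain ⟨T', hT'sub, hT'card⟩ := Finset.exists_subset_card_eq hcon
    set e := T'.orderEmbOfFin hT'card with he
    have hdet : ((vandermondeMatrix K n k).submatrix id e.toEmbedding).det ∈ P.asIdeal :=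
      hP (Ideal.subset_span ⟨e.toEmbedding, rfl⟩)
    rw [van_minor_eq] at hdet
    obtain ⟨i, -, hin⟩ := Ideal.IsPrime.prod_mem_iff.mp hdet
    obtain ⟨j, hjIoi, hfac⟩ := Ideal.IsPrime.prod_mem_iff.mp hin
    have hrepji : rep (e.toEmbedding j) = rep (e.toEmbedding i) := hrepeq _ _ hfac
    have hmemj : (e.toEmbedding j) ∈ T' := T'.orderEmbOfFin_mem hT'card j
    have hmemi : (e.toEmbedding i) ∈ T' := T'.orderEmbOfFin_mem hT'card i
    have heq : e.toEmbedding j = e.toEmbedding i := by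
      rw [← hTPfix _ (hT'sub hmemj), ← hTPfix _ (hT'sub hmemi)]
      exact hrepji
    have : j = i := e.toEmbedding.injective heq
    exact absurd this (Finset.mem_Ioi.mp hjIoi).ne'
  obtain ⟨T'', hsub, -, hT''card⟩ :=
    Finset.exists_subsuperset_card_eq TP.subset_univ hTPcard
      (by simp only [Finset.card_univ, Fintype.card_fin]; omega)
  set S : Finset (Fin n) := T''ᶜ with hSdef
  have hScard : S.card = n - k := by
    rw [hSdef, Finset.card_compl, hT''card]
    simp
  set e := S.orderEmbOfFin hScard with he
  have heS : ∀ s, e s ∈ S := fun s => S.orderEmbOfFin_mem hScard s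
  have hrepT : ∀ j, rep j ∉ S := by
    intro j hjS
    rw [hSdef, Finset.mem_compl] at hjS
    exact hjS (hsub (Finset.mem_image_of_mem rep (Finset.mem_univ j)))
  have hrepne : ∀ s, rep (e s) ≠ e s := fun s hh => hrepT (e s) (by rw [hh]; exact heS s)
  set gL : ℕ → Fin n → MvPolynomial (Fin n) K := fun t j =>
    if (∃ s : Fin (n-k), (s : ℕ) < t ∧ e s = j) then X (rep j) else X j with hgL
  set QL : ℕ → Ideal (MvPolynomial (Fin n) K) := fun t =>
    RingHom.ker (aeval (gL t) : MvPolynomial (Fin n) K →ₐ[K] MvPolynomial (Fin n) K) with hQL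
  have hQLprime : ∀ t, (QL t).IsPrime := fun t => RingHom.ker_isPrime _
  -- values of gL
  have hgLrep : ∀ t j, rep j = j → gL t j = X j := by
    intro t j hj
    simp only [hgL]
    split <;> simp [hj]
  have hstep : ∀ t : ℕ, t < n - k → QL t < QL (t+1) := by
    intro t ht
    set vt : Fin n := e ⟨t, ht⟩ with hvt
    have hnotc : ∀ t' : ℕ, ¬ (∃ s : Fin (n-k), (s : ℕ) < t' ∧ e s = rep vt) := by
      rintro t' ⟨s, -, hes⟩
      exact hrepT vt (hes ▸ heS s)
    have hvtnotc : ¬ (∃ s : Fin (n-k), (s : ℕ) < t ∧ e s = vt) := by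
      rintro ⟨s, hst, hes⟩
      have : s = ⟨t, ht⟩ := e.injective hes
      rw [this] at hst
      exact absurd hst (lt_irrefl t)
    have hle : QL t ≤ QL (t+1) := by
      apply ker_aeval_mono (h := fun j => if j = vt then X (rep vt) else X j)
      intro j
      by_cases hc : ∃ s : Fin (n-k), (s : ℕ) < t ∧ e s = j
      · obtain ⟨s, hst, hes⟩ := hc
        have hj1 : gL t j = X (rep j) := by
          simp only [hgL]; exact if_pos ⟨s, hst, hes⟩
        have hj2 : gL (t+1) j = X (rep j) := by
          simp only [hgL]; exact if_pos ⟨s, Nat.lt_succ_of_lt hst, hes⟩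
        rw [hj1, hj2, aeval_X]
        rw [if_neg]
        intro hh
        exact hrepT j (by rw [hh, hvt]; exact heS ⟨t, ht⟩)
      · by_cases hjv : j = vt
        · have hj1 : gL t j = X j := by simp only [hgL]; exact if_neg (hjv ▸ hvtnotc)
          have hj2 : gL (t+1) j = X (rep j) := by
            simp only [hgL]
            exact if_pos ⟨⟨t, ht⟩, Nat.lt_succ_self t, hjv.symm⟩
          rw [hj1, hj2, aeval_X, if_pos hjv, hjv]
        · have hj1 : gL t j = X j := by simp only [hgL]; exact if_neg hc
          have hj2 : gL (t+1) j = X j := by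
            simp only [hgL]
            apply if_neg
            rintro ⟨s, hst, hes⟩
            rcases Nat.lt_succ_iff_lt_or_eq.mp hst with h | h
            · exact hc ⟨s, h, hes⟩
            · apply hjv
              rw [← hes, hvt]
              congr 1
              exact Fin.ext h
          rw [hj1, hj2, aeval_X, if_neg hjv]
    have hmem : X vt - X (rep vt) ∈ QL (t+1) := by
      rw [hQL, RingHom.mem_ker, map_sub, aeval_X, aeval_X]
      have h1 : gL (t+1) vt = X (rep vt) := by
        simp only [hgL]
        exact if_pos ⟨⟨t, ht⟩, Nat.lt_succ_self t, rfl⟩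
      have h2 : gL (t+1) (rep vt) = X (rep vt) := by
        simp only [hgL]
        exact if_neg (hnotc (t+1))
      rw [h1, h2, sub_self]
    have hnot : X vt - X (rep vt) ∉ QL t := by
      rw [hQL, RingHom.mem_ker, map_sub, aeval_X, aeval_X]
      have h1 : gL t vt = X vt := by simp only [hgL]; exact if_neg hvtnotc
      have h2 : gL t (rep vt) = X (rep vt) := by simp only [hgL]; exact if_neg (hnotc t)
      rw [h1, h2]
      exact sub_ne_zero_of_ne (fun hh => (hrepne ⟨t, ht⟩) (X_injective hh).symm)
    exact lt_of_le_not_ge hle (fun hle' => hnot (hle' hmem))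
  have hlast : QL (n - k) ≤ P.asIdeal := by
    apply ker_aeval_le
    intro j
    simp only [hgL]
    split
    · exact hrepP j
    · rw [sub_self]; exact P.asIdeal.zero_mem
  set chain : LTSeries (PrimeSpectrum (MvPolynomial (Fin n) K)) :=
    { length := n - k
      toFun := fun t => ⟨QL (t : ℕ), hQLprime _⟩
      step := fun i => by
        show (⟨QL _, _⟩ : PrimeSpectrum _) < ⟨QL _, _⟩
        rw [← PrimeSpectrum.asIdeal_lt_asIdeal]
        have h1 : ((Fin.castSucc i : Fin (n-k+1)) : ℕ) = (i : ℕ) := rfl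
        have h2 : ((Fin.succ i : Fin (n-k+1)) : ℕ) = (i : ℕ) + 1 := rfl
        simpa [h1, h2] using hstep (i : ℕ) i.2 } with hchain
  have hlastle : chain.last ≤ P := by
    show (⟨QL _, _⟩ : PrimeSpectrum _) ≤ P
    rw [← PrimeSpectrum.asIdeal_le_asIdeal]
    have : ((Fin.last (n-k) : Fin (n-k+1)) : ℕ) = n - k := rfl
    simpa [this] using hlast
  have := Order.length_le_height hlastle
  exact this

/-- Vandermonde determinantal ideals: the height of `I_{n,k}` (the minimum of the heights
of the prime ideals containing it) equals `n - k`. -/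
theorem vanIdeal_height (K : Type*) [Field K] (n k : ℕ)
    (hk : 1 ≤ k) (hn : k < n) :
    (⨅ (P : PrimeSpectrum (MvPolynomial (Fin n) K)) (_ : vanIdeal K n k ≤ P.asIdeal),
      Order.height P) = ((n - k : ℕ) : ℕ∞) := by
  apply le_antisymm
  · obtain ⟨P, hP, hub⟩ := upper_bound (K := K) hk hn
    exact iInf₂_le_of_le P hP hub
  · exact le_iInf₂ (fun P hP => lower_bound hk hn P hP)
end

section
/- Let K be an algebraically closed field, n > k ≥ 1 integers, R = K[x₁,…,xₙ], and I_{n,k} the ideal generated by all (k+1)-minors of the (k+1)×n Vandermonde matrix M_{n,k}. For a partition Π = {F₁,…,F_k} of {1,…,n} into k nonempty blocks, let P_Π be the ideal of R generated by the differences x_i − x_j for all i, j lying in a common block of Π. Then the radical of I_{n,k} equals the intersection of the ideals P_Π over all partitions Π of {1,…,n} into exactly k nonempty blocks. -/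
open MvPolynomial

/-- For a partition `Π` of `{1,…,n}` (into nonempty blocks), `P_Π` is the ideal generated
by the differences `xᵢ - xⱼ` for all `i, j` lying in a common block of `Π`. -/
noncomputable def partitionIdeal (K : Type*) [Field K] {n : ℕ}
    (P : Finpartition (Finset.univ : Finset (Fin n))) : Ideal (MvPolynomial (Fin n) K) :=
  Ideal.span { f | ∃ i j : Fin n, ∃ F ∈ P.parts, i ∈ F ∧ j ∈ F ∧ f = X i - X j }

section Aux

variable {K : Type*} [Field K] {n k : ℕ}

private lemma min'_congr {α : Type*} [LinearOrder α] {s t : Finset α} (h : s = t)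
    (hs : s.Nonempty) : s.min' hs = t.min' (h ▸ hs) := by subst h; rfl

lemma mem_zeroLocus_partitionIdeal {P : Finpartition (Finset.univ : Finset (Fin n))}
    {a : Fin n → K} :
    a ∈ MvPolynomial.zeroLocus K (partitionIdeal K P) ↔
      ∀ F ∈ P.parts, ∀ i ∈ F, ∀ j ∈ F, a i = a j := by
  rw [partitionIdeal, MvPolynomial.zeroLocus_span]
  constructor
  · intro h F hF i hi j hj
    have := h (X i - X j) ⟨i, j, F, hF, hi, hj, rfl⟩
    simpa [sub_eq_zero] using this
  · rintro h p ⟨i, j, F, hF, hi, hj, rfl⟩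
    simp [sub_eq_zero, h F hF i hi j hj]

lemma sub_rename_mem (P : Finpartition (Finset.univ : Finset (Fin n)))
    (r : Fin n → Fin n) (hr : ∀ i, ∃ F ∈ P.parts, i ∈ F ∧ r i ∈ F)
    (f : MvPolynomial (Fin n) K) :
    f - rename r f ∈ partitionIdeal K P := by
  induction f using MvPolynomial.induction_on with
  | C a => rw [rename_C, sub_self]; exact Ideal.zero_mem _
  | add p q hp hq =>
      rw [map_add]
      have := Ideal.add_mem _ hp hq
      convert this using 1
      ring
  | mul_X p i hp =>
      rw [map_mul, rename_X]
      have h1 : p * X i - rename r p * X (r i)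
          = (p - rename r p) * X i + rename r p * (X i - X (r i)) := by ring
      rw [h1]
      refine Ideal.add_mem _ (Ideal.mul_mem_right _ _ hp) (Ideal.mul_mem_left _ _ ?_)
      obtain ⟨F, hF, hi, hri⟩ := hr i
      exact Ideal.subset_span ⟨i, r i, F, hF, hi, hri, rfl⟩

lemma vanishingIdeal_zeroLocus_partitionIdeal [Infinite K]
    (P : Finpartition (Finset.univ : Finset (Fin n))) :
    MvPolynomial.vanishingIdeal K (MvPolynomial.zeroLocus K (partitionIdeal K P))
      = partitionIdeal K P := by
  refine le_antisymm ?_ (MvPolynomial.le_vanishingIdeal_zeroLocus _)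
  intro f hf
  set r : Fin n → Fin n := fun i =>
    (P.part i).min' (P.nonempty_of_mem_parts (P.part_mem.2 (Finset.mem_univ i))) with hrdef
  have hrmem : ∀ i, r i ∈ P.part i := fun i => Finset.min'_mem _ _
  have hr : ∀ i, ∃ F ∈ P.parts, i ∈ F ∧ r i ∈ F := fun i =>
    ⟨P.part i, P.part_mem.2 (Finset.mem_univ i), P.mem_part (Finset.mem_univ i), hrmem i⟩
  have hzero : rename r f = 0 := by
    apply MvPolynomial.funext
    intro a
    rw [eval_rename, map_zero]
    rw [← MvPolynomial.coe_aeval_eq_eval]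
    apply hf
    rw [mem_zeroLocus_partitionIdeal]
    intro F hF i hi j hj
    have h2 : P.part i = P.part j :=
      (P.part_eq_of_mem hF hi).trans (P.part_eq_of_mem hF hj).symm
    have hrij : r i = r j := by
      simp only [hrdef]
      exact min'_congr h2 _
    show a (r i) = a (r j)
    rw [hrij]
  have := sub_rename_mem P r hr f
  rwa [hzero, sub_zero] at this

lemma eval_minor (a : Fin n → K) (g : Fin (k + 1) ↪ Fin n) :
    eval a (((vandermondeMatrix K n k).submatrix id g).det)
      = (Matrix.vandermonde (fun i => a (g i))).det := by
  have hM : ((vandermondeMatrix K n k).submatrix id g).map (eval a)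
      = (Matrix.vandermonde (fun i => a (g i))).transpose := by
    ext i j
    simp [vandermondeMatrix, Matrix.vandermonde_apply, Matrix.transpose_apply,
      Matrix.map_apply, Matrix.submatrix_apply]
  rw [RingHom.map_det, RingHom.mapMatrix_apply, hM, Matrix.det_transpose]

lemma mem_zeroLocus_vanIdeal {a : Fin n → K} :
    a ∈ MvPolynomial.zeroLocus K (vanIdeal K n k) ↔
      ∀ g : Fin (k + 1) ↪ Fin n, ¬ Function.Injective (a ∘ g) := by
  rw [vanIdeal, MvPolynomial.zeroLocus_span]
  constructor
  · intro h g hg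
    have := h _ ⟨g, rfl⟩
    change eval a _ = 0 at this
    rw [eval_minor] at this
    exact Matrix.det_vandermonde_ne_zero_iff.mpr hg this
  · rintro h p ⟨g, rfl⟩
    change eval a _ = 0
    rw [eval_minor]
    by_contra hne
    exact h g (Matrix.det_vandermonde_ne_zero_iff.mp hne)

variable [DecidableEq K]

lemma zeroLocus_vanIdeal_iff_card (hn : k < n) {a : Fin n → K} :
    a ∈ MvPolynomial.zeroLocus K (vanIdeal K n k) ↔ (Finset.univ.image a).card ≤ k := by
  rw [mem_zeroLocus_vanIdeal]
  constructor
  · intro h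
    by_contra hc
    push_neg at hc
    obtain ⟨t, hts, htc⟩ := Finset.exists_subset_card_eq hc
    have hmem : ∀ v : {x // x ∈ t}, ∃ x : Fin n, a x = v.1 := by
      intro v
      have := hts v.2
      simp only [Finset.mem_image] at this
      obtain ⟨x, -, hx⟩ := this
      exact ⟨x, hx⟩
    choose e he using hmem
    have hainj : ∀ v w : {x // x ∈ t}, e v = e w → v = w := by
      intro v w hvw
      have : v.1 = w.1 := by rw [← he v, ← he w, hvw]
      exact Subtype.ext this
    set g0 : Fin (k + 1) → Fin n := fun i => e (t.equivFin.symm (Fin.cast htc.symm i)) with hg0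
    have hg0inj : Function.Injective g0 := by
      intro i j hij
      have := hainj _ _ hij
      have := t.equivFin.symm.injective this
      exact Fin.cast_injective _ this
    refine h ⟨g0, hg0inj⟩ ?_
    intro i j hij
    have hij' : (t.equivFin.symm (Fin.cast htc.symm i)).1
        = (t.equivFin.symm (Fin.cast htc.symm j)).1 := by
      rw [← he, ← he]; exact hij
    have := t.equivFin.symm.injective (Subtype.ext hij')
    exact Fin.cast_injective _ this
  · intro hcard g hg
    have h1 : (Finset.univ.image (a ∘ ⇑g)).card = k + 1 := by
      rw [Finset.card_image_of_injective _ hg, Finset.card_univ, Fintype.card_fin]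
    have h2 : (Finset.univ.image (a ∘ ⇑g)) ⊆ Finset.univ.image a := by
      intro v hv
      simp only [Finset.mem_image] at hv ⊢
      obtain ⟨i, -, rfl⟩ := hv
      exact ⟨g i, Finset.mem_univ _, rfl⟩
    have := Finset.card_le_card h2
    omega

/-- refine a surjection onto `Fin m` to a surjection onto `Fin k`, `m ≤ k ≤ n`. -/
lemma exists_surj_refine {n m : ℕ} (d : Fin n → Fin m) (hd : Function.Surjective d) :
    ∀ k : ℕ, m ≤ k → k ≤ n →
      ∃ c : Fin n → Fin k, Function.Surjective c ∧ ∀ x y, c x = c y → d x = d y := by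
  intro k hmk
  induction k, hmk using Nat.le_induction with
  | base => exact fun _ => ⟨d, hd, fun x y h => h⟩
  | succ k hmk IH =>
      intro hk1
      obtain ⟨c, hcs, hcr⟩ := IH (by omega)
      have hcard : Fintype.card (Fin k) < Fintype.card (Fin n) := by
        simp only [Fintype.card_fin]; omega
      obtain ⟨x, y, hxy, hcxy⟩ := Fintype.exists_ne_map_eq_of_card_lt c hcard
      classical
      set c' : Fin n → Fin (k + 1) :=
        fun z => if z = x then Fin.last k else (c z).castSucc with hc'
      refine ⟨c', ?_, ?_⟩
      · intro v
        rcases Fin.eq_castSucc_or_eq_last v with ⟨w, rfl⟩ | rfl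
        · obtain ⟨z, hz⟩ := hcs w
          by_cases hzx : z = x
          · refine ⟨y, ?_⟩
            have hyx : y ≠ x := fun h => hxy h.symm
            show (if y = x then Fin.last k else (c y).castSucc) = w.castSucc
            rw [if_neg hyx, ← hcxy, ← hzx, hz]
          · refine ⟨z, ?_⟩
            show (if z = x then Fin.last k else (c z).castSucc) = w.castSucc
            rw [if_neg hzx, hz]
        · exact ⟨x, by show (if x = x then _ else _) = _; rw [if_pos rfl]⟩
      · intro x' y' h
        by_cases hx' : x' = x <;> by_cases hy' : y' = x
        · subst hx'; subst hy'; rfl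
        · exfalso
          simp only [hc', if_pos hx', if_neg hy'] at h
          exact (Fin.castSucc_lt_last (c y')).ne' h
        · exfalso
          simp only [hc', if_neg hx', if_pos hy'] at h
          exact (Fin.castSucc_lt_last (c x')).ne h
        · simp only [hc', if_neg hx', if_neg hy'] at h
          exact hcr _ _ (Fin.castSucc_injective _ h)

lemma exists_partition (hkn : k ≤ n) {a : Fin n → K}
    (hcard : (Finset.univ.image a).card ≤ k) :
    ∃ P : Finpartition (Finset.univ : Finset (Fin n)), P.parts.card = k ∧
      ∀ F ∈ P.parts, ∀ i ∈ F, ∀ j ∈ F, a i = a j := by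
  classical
  set s := Finset.univ.image a with hs
  have hamem : ∀ x : Fin n, a x ∈ s := fun x => Finset.mem_image_of_mem a (Finset.mem_univ x)
  set d : Fin n → Fin s.card := fun x => s.equivFin ⟨a x, hamem x⟩ with hd
  have hdsurj : Function.Surjective d := by
    intro v
    set w := s.equivFin.symm v with hwdef
    have hw : w.1 ∈ Finset.univ.image a := w.2
    rw [Finset.mem_image] at hw
    obtain ⟨x, -, hx⟩ := hw
    refine ⟨x, ?_⟩
    have hsub : (⟨a x, hamem x⟩ : {y // y ∈ s}) = w := Subtype.ext hx
    show s.equivFin ⟨a x, hamem x⟩ = v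
    rw [hsub, hwdef, Equiv.apply_symm_apply]
  have hdrefl : ∀ x y, d x = d y → a x = a y := by
    intro x y hxy
    have h := s.equivFin.injective hxy
    exact congrArg Subtype.val h
  obtain ⟨c, hcs, hcr⟩ := exists_surj_refine d hdsurj k hcard hkn
  have hc : ∀ x y, c x = c y → a x = a y := fun x y h => hdrefl x y (hcr x y h)
  haveI : DecidableRel (Setoid.ker c).r := fun x y =>
    inferInstanceAs (Decidable (c x = c y))
  set P := Finpartition.ofSetoid (Setoid.ker c) with hP
  have hmempart : ∀ i j : Fin n, j ∈ P.part i ↔ c i = c j := by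
    intro i j
    exact Finpartition.mem_part_ofSetoid_iff_rel
  have hconst : ∀ F ∈ P.parts, ∀ i ∈ F, ∀ j ∈ F, c i = c j := by
    intro F hF i hi j hj
    have hFi : P.part i = F := P.part_eq_of_mem hF hi
    have : j ∈ P.part i := hFi ▸ hj
    exact (hmempart i j).mp this
  refine ⟨P, ?_, fun F hF i hi j hj => hc _ _ (hconst F hF i hi j hj)⟩
  -- card computation
  set u : Fin k → Fin n := Function.surjInv hcs with hu
  have hcu : ∀ v, c (u v) = v := fun v => Function.surjInv_eq hcs v
  have hparts : P.parts = Finset.univ.image (fun v : Fin k => P.part (u v)) := by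
    apply Finset.Subset.antisymm
    · intro F hF
      obtain ⟨i, hi⟩ := P.nonempty_of_mem_parts hF
      have hFi : P.part i = F := P.part_eq_of_mem hF hi
      refine Finset.mem_image.mpr ⟨c i, Finset.mem_univ _, ?_⟩
      have hiu : i ∈ P.part (u (c i)) := (hmempart (u (c i)) i).mpr (hcu (c i))
      have heq : P.part i = P.part (u (c i)) :=
        P.part_eq_of_mem (P.part_mem.2 (Finset.mem_univ (u (c i)))) hiu
      rw [← heq, hFi]
    · intro F hF
      obtain ⟨v, -, rfl⟩ := Finset.mem_image.mp hF
      exact P.part_mem.2 (Finset.mem_univ _)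
  have hinj : Function.Injective (fun v : Fin k => P.part (u v)) := by
    intro v w hvw
    have hvw' : P.part (u v) = P.part (u w) := hvw
    have h3 : u w ∈ P.part (u v) := hvw' ▸ P.mem_part (Finset.mem_univ (u w))
    have h4 := (hmempart (u v) (u w)).mp h3
    rwa [hcu, hcu] at h4
  rw [hparts, Finset.card_image_of_injective _ hinj, Finset.card_univ, Fintype.card_fin]

end Aux

/-- Over an algebraically closed field, the radical of the Vandermonde determinantal ideal
`I_{n,k}` is the intersection of the ideals `P_Π`, where `Π` runs over all partitions of
`{1,…,n}` into exactly `k` nonempty blocks. -/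
theorem vanIdeal_radical_eq_inf (K : Type*) [Field K] [IsAlgClosed K] (n k : ℕ)
    (hk : 1 ≤ k) (hn : k < n) :
    (vanIdeal K n k).radical =
      ⨅ (P : Finpartition (Finset.univ : Finset (Fin n))) (_ : P.parts.card = k),
        partitionIdeal K P := by
  classical
  have hzl : MvPolynomial.zeroLocus K (vanIdeal K n k)
      = ⋃ (P : Finpartition (Finset.univ : Finset (Fin n))) (_ : P.parts.card = k),
          MvPolynomial.zeroLocus K (partitionIdeal K P) := by
    ext a
    simp only [Set.mem_iUnion]
    constructor
    · intro ha
      obtain ⟨P, hPc, hPa⟩ := exists_partition hn.le ((zeroLocus_vanIdeal_iff_card hn).mp ha)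
      exact ⟨P, hPc, mem_zeroLocus_partitionIdeal.mpr hPa⟩
    · rintro ⟨P, hPc, ha⟩
      rw [mem_zeroLocus_partitionIdeal] at ha
      rw [mem_zeroLocus_vanIdeal]
      intro g hg
      have hcards : P.parts.card < (Finset.univ : Finset (Fin (k + 1))).card := by
        simp [hPc]
      obtain ⟨i, -, j, -, hij, hpart⟩ :=
        Finset.exists_ne_map_eq_of_card_lt_of_maps_to hcards
          (fun i _ => P.part_mem.2 (Finset.mem_univ (g i)))
      have h1 : g i ∈ P.part (g i) := P.mem_part (Finset.mem_univ _)
      have h2 : g j ∈ P.part (g i) := hpart ▸ P.mem_part (Finset.mem_univ (g j))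
      have := ha _ (P.part_mem.2 (Finset.mem_univ (g i))) _ h1 _ h2
      exact hij (hg this)
  rw [← MvPolynomial.vanishingIdeal_zeroLocus_eq_radical (K := K), hzl]
  ext p
  simp only [Ideal.mem_iInf, MvPolynomial.mem_vanishingIdeal_iff, Set.mem_iUnion]
  constructor
  · intro h P hP
    rw [← vanishingIdeal_zeroLocus_partitionIdeal P]
    intro x hx
    exact h x ⟨P, hP, hx⟩
  · rintro h x ⟨P, hP, hx⟩
    have := h P hP
    rw [← vanishingIdeal_zeroLocus_partitionIdeal P] at this
    exact this x hx
end

section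
/- Let K be a field, n > k ≥ 1 integers, R = K[x₁,…,xₙ], and I_{n,k} the ideal generated by all (k+1)-minors of the (k+1)×n Vandermonde matrix M_{n,k}. Let N_{n,k} be the k×(n−1) matrix whose (i,j)-entry is x_{j+1}^i − x₁^i for i = 1,…,k and j = 1,…,n−1. Then I_{n,k} is equal to the ideal of R generated by all k-minors (maximal minors) of N_{n,k}. -/
open MvPolynomial

/-- The `k × (n-1)` matrix `N_{n,k}` whose `(i,j)` entry is `x_{j+1}^i - x₁^i`
for `i = 1,…,k` and `j = 1,…,n-1`. -/
noncomputable def nMatrix (K : Type*) [Field K] (n k : ℕ) :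
    Matrix (Fin k) (Fin (n - 1)) (MvPolynomial (Fin n) K) :=
  Matrix.of fun i j =>
    (X (⟨j.1 + 1, by have := j.isLt; omega⟩ : Fin n) : MvPolynomial (Fin n) K) ^ ((i : ℕ) + 1)
      - (X (⟨0, by have := j.isLt; omega⟩ : Fin n)) ^ ((i : ℕ) + 1)

/-- The auxiliary `k × k` matrix obtained from the columns `g ∘ j.succAbove`,
with `(r,c)` entry `x_{g(j.succAbove c)}^(r+1) - x₀^(r+1)`. -/
noncomputable def auxMatrix (K : Type*) [Field K] (n k : ℕ) (hn0 : 0 < n)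
    (g : Fin (k + 1) ↪ Fin n) (j : Fin (k + 1)) :
    Matrix (Fin k) (Fin k) (MvPolynomial (Fin n) K) :=
  Matrix.of fun r c =>
    (X (g (j.succAbove c)) : MvPolynomial (Fin n) K) ^ ((r : ℕ) + 1)
      - (X (⟨0, hn0⟩ : Fin n)) ^ ((r : ℕ) + 1)

/-- Laplace expansion of a maximal Vandermonde minor after the row reduction
`row r ↦ row r - x₀^r · row 0`. -/
lemma vandermonde_minor_expand (K : Type*) [Field K] (n k : ℕ) (hn0 : 0 < n)
    (g : Fin (k + 1) ↪ Fin n) :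
    ((vandermondeMatrix K n k).submatrix id g).det
      = ∑ j : Fin (k + 1), (-1) ^ (j : ℕ) * (auxMatrix K n k hn0 g j).det := by
  classical
  set R := MvPolynomial (Fin n) K
  set x0 : R := X (⟨0, hn0⟩ : Fin n) with hx0
  set V : Matrix (Fin (k + 1)) (Fin (k + 1)) R :=
    (vandermondeMatrix K n k).submatrix id g with hV
  set E : Matrix (Fin (k + 1)) (Fin (k + 1)) R :=
    Matrix.of fun r s =>
      if s = 0 then (if r = 0 then 1 else -(x0 ^ (r : ℕ))) else if r = s then 1 else 0 with hE
  set W : Matrix (Fin (k + 1)) (Fin (k + 1)) R :=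
    Matrix.of fun r c =>
      if r = 0 then 1 else (X (g c) : R) ^ (r : ℕ) - x0 ^ (r : ℕ) with hW
  have hEdet : E.det = 1 := by
    rw [Matrix.det_of_lowerTriangular E]
    · apply Finset.prod_eq_one
      intro i _
      simp only [hE, Matrix.of_apply]
      by_cases h : i = 0 <;> simp [h]
    · intro i j hij
      have hij' : i < j := hij
      simp only [hE, Matrix.of_apply]
      rw [if_neg (by rintro rfl; exact absurd hij' (by simp)),
        if_neg (by rintro rfl; exact lt_irrefl _ hij')]
  have hEV : E * V = W := by
    refine Matrix.ext fun r c => ?_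
    rw [Matrix.mul_apply]
    by_cases hr : r = 0
    · subst hr
      rw [Finset.sum_eq_single 0]
      · simp [hE, hV, hW, vandermondeMatrix]
      · intro b _ hb
        simp [hE, hb, Ne.symm hb]
      · simp
    · rw [← Finset.add_sum_erase _ _ (Finset.mem_univ 0)]
      have : ∑ s ∈ Finset.univ.erase 0, E r s * V s c
          = ∑ s ∈ Finset.univ.erase 0, (if r = s then V s c else 0) := by
        apply Finset.sum_congr rfl
        intro s hs
        have hs0 : s ≠ 0 := (Finset.mem_erase.mp hs).1
        simp only [hE, Matrix.of_apply, if_neg hs0]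
        by_cases h : r = s <;> simp [h]
      rw [this, Finset.sum_ite_eq, if_pos (Finset.mem_erase.mpr ⟨hr, Finset.mem_univ r⟩)]
      simp [hE, hV, hW, hr, vandermondeMatrix, sub_eq_neg_add]
  have hVdet : V.det = W.det := by
    rw [← hEV, Matrix.det_mul, hEdet, one_mul]
  rw [hVdet, Matrix.det_succ_row_zero]
  apply Finset.sum_congr rfl
  intro j _
  have h0 : W 0 j = 1 := by simp [hW]
  rw [h0, mul_one]
  congr 1

/-- `I_{n,k}` is generated by the maximal (`k`-size) minors of the `k × (n-1)` matrix
`N_{n,k}`. -/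
theorem vanIdeal_eq_nMatrix_minors (K : Type*) [Field K] (n k : ℕ)
    (hk : 1 ≤ k) (hn : k < n) :
    vanIdeal K n k = Ideal.span { d | ∃ g : Fin k ↪ Fin (n - 1),
      d = ((nMatrix K n k).submatrix id g).det } := by
  classical
  have hn0 : 0 < n := lt_of_le_of_lt (Nat.zero_le k) hn
  apply le_antisymm
  · rw [vanIdeal, Ideal.span_le]
    rintro d ⟨g, rfl⟩
    rw [vandermonde_minor_expand K n k hn0 g]
    apply Ideal.sum_mem
    intro j _
    apply Ideal.mul_mem_left
    by_cases hzero : ∃ c : Fin k, g (j.succAbove c) = ⟨0, hn0⟩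
    · obtain ⟨c, hc⟩ := hzero
      have : (auxMatrix K n k hn0 g j).det = 0 := by
        apply Matrix.det_eq_zero_of_column_eq_zero c
        intro i
        simp [auxMatrix, hc]
      rw [this]; exact Ideal.zero_mem _
    · push_neg at hzero
      have hpos : ∀ c : Fin k, 0 < (g (j.succAbove c)).1 := by
        intro c
        exact Nat.pos_of_ne_zero (fun h => hzero c (Fin.ext h))
      refine Ideal.subset_span ⟨⟨fun c => ⟨(g (j.succAbove c)).1 - 1, by
        have := (g (j.succAbove c)).isLt; have := hpos c; omega⟩, ?_⟩, ?_⟩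
      · intro c₁ c₂ h
        have h1 := hpos c₁; have h2 := hpos c₂
        have : (g (j.succAbove c₁)).1 = (g (j.succAbove c₂)).1 := by
          have := congrArg Fin.val h; simp at this; omega
        exact Fin.succAbove_right_injective (g.injective (Fin.ext this))
      · congr 1
        ext r c : 1
        simp only [Matrix.submatrix_apply, auxMatrix, nMatrix, Matrix.of_apply, id_eq,
          Function.Embedding.coeFn_mk]
        have : (⟨(g (j.succAbove c)).1 - 1 + 1, by have := (g (j.succAbove c)).isLt; have := hpos c; omega⟩ : Fin n)
            = g (j.succAbove c) := by
          apply Fin.ext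
          show (g (j.succAbove c)).1 - 1 + 1 = (g (j.succAbove c)).1
          have := hpos c; omega
        congr 3
        exact this.symm
  · rw [Ideal.span_le]
    rintro d ⟨h, rfl⟩
    have hg : ∀ c : Fin (n - 1), (c : ℕ) + 1 < n := fun c => by have := c.isLt; omega
    set g : Fin (k + 1) ↪ Fin n :=
      ⟨fun j => if hj : j = 0 then ⟨0, hn0⟩ else ⟨(h (j.pred hj)).1 + 1, hg _⟩, by
        intro a b hab
        dsimp only at hab
        by_cases ha : a = 0 <;> by_cases hb : b = 0
        · rw [ha, hb]
        · rw [dif_pos ha, dif_neg hb] at hab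
          exact absurd (congrArg Fin.val hab) (by simp)
        · rw [dif_neg ha, dif_pos hb] at hab
          exact absurd (congrArg Fin.val hab) (by simp)
        · rw [dif_neg ha, dif_neg hb] at hab
          have : h (a.pred ha) = h (b.pred hb) := Fin.ext (by
            have := congrArg Fin.val hab; simpa using this)
          have := h.injective this
          rw [← Fin.succ_pred a ha, ← Fin.succ_pred b hb, this]⟩ with hgdef
    have key : ((vandermondeMatrix K n k).submatrix id g).det
        = ((nMatrix K n k).submatrix id h).det := by
      rw [vandermonde_minor_expand K n k hn0 g]
      rw [Finset.sum_eq_single 0]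
      · simp only [Fin.val_zero, pow_zero, one_mul]
        congr 1
      · intro j _ hj
        have hcol : g (j.succAbove ⟨0, hk⟩) = ⟨0, hn0⟩ := by
          have : j.succAbove ⟨0, hk⟩ = (⟨0, hk⟩ : Fin k).castSucc := by
            apply Fin.succAbove_of_castSucc_lt
            exact lt_of_le_of_ne (Fin.zero_le j) (by simpa using (Ne.symm hj))
          rw [this]
          simp only [hgdef, Function.Embedding.coeFn_mk]
          show (if hj : (⟨0, hk⟩ : Fin k).castSucc = 0 then (⟨0, hn0⟩ : Fin n) else ⟨(h ((⟨0, hk⟩ : Fin k).castSucc.pred hj)).1 + 1, hg _⟩) = _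
          exact dif_pos (show (⟨0, hk⟩ : Fin k).castSucc = 0 from by ext; simp)
        have : (auxMatrix K n k hn0 g j).det = 0 := by
          apply Matrix.det_eq_zero_of_column_eq_zero ⟨0, hk⟩
          intro i
          simp [auxMatrix, hcol]
        rw [this, mul_zero]
      · simp
    rw [← key]
    exact Ideal.subset_span ⟨g, rfl⟩
end
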